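/- For any n ≥ 2, any function d : ℕ → ℝ (with d symmetric extension d(|j−l|)), pairwise distinct reals t₁,…,tₙ, and any fixed index s: ∑_{l ≠ s} ∑_{j ≠ l} d(|j−l|) (t_l − t_s)/(t_l − t_j) = ∑_{l < j} d(j−l). -/

import Mathlib

open Finset

set_option maxHeartbeats 1000000 in
/-- `∑_{l≠s} ∑_{j≠l} d(|j−l|) (t_l − t_s)/(t_l − t_j) = ∑_{l<j} d(j−l)`
for pairwise distinct reals `t₁,…,tₙ`. -/
theorem stmt4 (n : ℕ) (hn : 2 ≤ n) (t : Fin n → ℝ)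
    (hdist : Function.Injective t) (s : Fin n) (d : ℕ → ℝ) :
    ∑ l ∈ univ.filter (fun l => l ≠ s),
      ∑ j ∈ univ.filter (fun j => j ≠ l),
        d (Nat.dist (j : ℕ) (l : ℕ)) * ((t l - t s) / (t l - t j))
    = ∑ l : Fin n, ∑ j ∈ univ.filter (fun j => l < j), d ((j : ℕ) - (l : ℕ)) := by
  classical
  set F : Fin n → Fin n → ℝ := fun l j =>
    d (Nat.dist (j : ℕ) (l : ℕ)) * ((t l - t s) / (t l - t j)) with hF
  set A : Finset (Fin n) := univ.filter (fun l => l ≠ s) with hA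
  set B : Fin n → Finset (Fin n) := fun l => univ.filter (fun j => j ≠ s ∧ j ≠ l) with hB
  have hts : ∀ {a b : Fin n}, a ≠ b → t a - t b ≠ 0 := by
    intro a b h
    exact sub_ne_zero.mpr (fun he => h (hdist he))
  have key : ∀ l j : Fin n, l ≠ j → F l j + F j l = d (Nat.dist (j : ℕ) (l : ℕ)) := by
    intro l j h
    have h1 := hts h
    have h2 := hts h.symm
    simp only [hF]
    rw [Nat.dist_comm (l:ℕ) (j:ℕ)]
    field_simp
    ring
  set C : ℝ := ∑ l ∈ A, d (Nat.dist (s : ℕ) (l : ℕ)) with hC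
  set S : ℝ := ∑ l ∈ A, ∑ j ∈ B l, F l j with hS
  set T : ℝ := ∑ l ∈ A, ∑ j ∈ B l, d (Nat.dist (j : ℕ) (l : ℕ)) with hT
  -- LHS = C + S
  have hsplit : ∀ l ∈ A, ∑ j ∈ univ.filter (fun j => j ≠ l), F l j
      = d (Nat.dist (s : ℕ) (l : ℕ)) + ∑ j ∈ B l, F l j := by
    intro l hl
    have hls : l ≠ s := by simpa [hA] using hl
    have hmem : s ∈ univ.filter (fun j => j ≠ l) := by simp [hls.symm]
    have herase : (univ.filter (fun j => j ≠ l)).erase s = B l := by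
      ext x; simp [hB, and_comm]
    rw [← Finset.add_sum_erase _ _ hmem, herase]
    have : F l s = d (Nat.dist (s : ℕ) (l : ℕ)) := by
      simp [hF, div_self (hts hls)]
    rw [this]
  have hLHS : ∑ l ∈ A, ∑ j ∈ univ.filter (fun j => j ≠ l), F l j = C + S := by
    rw [Finset.sum_congr rfl hsplit, Finset.sum_add_distrib]
  -- S appears twice: swap
  have hswap : ∑ l ∈ A, ∑ j ∈ B l, F j l = S := by
    have hiff : ∀ x y : Fin n, x ∈ A ∧ y ∈ B x ↔ x ∈ B y ∧ y ∈ A := by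
      intro x y
      simp only [hA, hB, mem_filter, mem_univ, true_and]
      tauto
    rw [Finset.sum_comm' hiff]
  have hST : 2 * S = T := by
    have : S + S = T := by
      nth_rewrite 2 [← hswap]
      rw [hS, ← Finset.sum_add_distrib]
      apply Finset.sum_congr rfl
      intro l hl
      rw [← Finset.sum_add_distrib]
      apply Finset.sum_congr rfl
      intro j hj
      have hjl : j ≠ l := by simp only [hB, mem_filter] at hj; exact hj.2.2
      exact key l j hjl.symm
    linarith
  -- U : sum over all ordered distinct pairs
  set U : ℝ := ∑ l : Fin n, ∑ j ∈ univ.filter (fun j => j ≠ l),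
      d (Nat.dist (j : ℕ) (l : ℕ)) with hU
  -- U = 2C + T
  have hUsplit : U = 2 * C + T := by
    have herase : (univ : Finset (Fin n)).erase s = A := by
      ext x; simp [hA]
    rw [hU, ← Finset.add_sum_erase univ _ (mem_univ s), herase]
    have h1 : ∑ j ∈ univ.filter (fun j => j ≠ s), d (Nat.dist (j:ℕ) (s:ℕ)) = C := by
      rw [hC]
      apply Finset.sum_congr
      · rfl
      · intro x _; rw [Nat.dist_comm]
    have h2 : ∀ l ∈ A, ∑ j ∈ univ.filter (fun j => j ≠ l), d (Nat.dist (j:ℕ) (l:ℕ))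
        = d (Nat.dist (s:ℕ) (l:ℕ)) + ∑ j ∈ B l, d (Nat.dist (j:ℕ) (l:ℕ)) := by
      intro l hl
      have hls : l ≠ s := by simpa [hA] using hl
      have hmem : s ∈ univ.filter (fun j => j ≠ l) := by simp [hls.symm]
      have herase : (univ.filter (fun j => j ≠ l)).erase s = B l := by
        ext x; simp [hB, and_comm]
      rw [← Finset.add_sum_erase _ _ hmem, herase]
    rw [Finset.sum_congr rfl h2, Finset.sum_add_distrib, h1, ← hC, ← hT]
    ring
  -- U = 2 * RHS
  have hRHS : U = 2 * ∑ l : Fin n, ∑ j ∈ univ.filter (fun j => l < j),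
      d ((j : ℕ) - (l : ℕ)) := by
    have hfil : ∀ l : Fin n, univ.filter (fun j => j ≠ l)
        = univ.filter (fun j => l < j) ∪ univ.filter (fun j => j < l) := by
      intro l; ext x
      simp only [mem_filter, mem_univ, true_and, mem_union]
      constructor
      · intro h; rcases lt_or_gt_of_ne h with h | h
        · right; exact h
        · left; exact h
      · rintro (h | h)
        · exact (ne_of_lt h).symm
        · exact ne_of_lt h
    have hdisj : ∀ l : Fin n, Disjoint (univ.filter (fun j => l < j))
        (univ.filter (fun j => j < l)) := by
      intro l
      simp only [Finset.disjoint_filter]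
      intro x _ h1 h2
      exact absurd h2 (not_lt_of_gt h1)
    have hW : ∑ l : Fin n, ∑ j ∈ univ.filter (fun j => j < l), d (Nat.dist (j:ℕ) (l:ℕ))
        = ∑ l : Fin n, ∑ j ∈ univ.filter (fun j => l < j), d (Nat.dist (j:ℕ) (l:ℕ)) := by
      have hiff2 : ∀ x y : Fin n, x ∈ univ ∧ y ∈ univ.filter (fun j => j < x) ↔
          x ∈ univ.filter (fun l => y < l) ∧ y ∈ univ := by intro x y; simp
      rw [Finset.sum_comm' hiff2]
      apply Finset.sum_congr rfl
      intro l _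
      apply Finset.sum_congr rfl
      intro j _
      rw [Nat.dist_comm]
    have hgt : ∀ l : Fin n, ∀ j ∈ univ.filter (fun j => l < j),
        d (Nat.dist (j:ℕ) (l:ℕ)) = d ((j:ℕ) - (l:ℕ)) := by
      intro l j hj
      have : l < j := by simpa using hj
      have hle : (l:ℕ) ≤ (j:ℕ) := le_of_lt this
      rw [Nat.dist_comm, Nat.dist_eq_sub_of_le hle]
    calc U = ∑ l : Fin n, (∑ j ∈ univ.filter (fun j => l < j), d (Nat.dist (j:ℕ) (l:ℕ))
          + ∑ j ∈ univ.filter (fun j => j < l), d (Nat.dist (j:ℕ) (l:ℕ))) := by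
            rw [hU]
            apply Finset.sum_congr rfl
            intro l _
            rw [hfil l, Finset.sum_union (hdisj l)]
      _ = 2 * ∑ l : Fin n, ∑ j ∈ univ.filter (fun j => l < j), d (Nat.dist (j:ℕ) (l:ℕ)) := by
            rw [Finset.sum_add_distrib, hW]; ring
      _ = 2 * ∑ l : Fin n, ∑ j ∈ univ.filter (fun j => l < j), d ((j:ℕ) - (l:ℕ)) := by
            congr 1
            exact Finset.sum_congr rfl (fun l _ => Finset.sum_congr rfl (hgt l))
  rw [hLHS]
  linarith [hST, hUsplit, hRHS]
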